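/- arXiv:2106.13357 — 6 statements merged into one kernel-verified Lean document; each statement's English description precedes it below -/
import Mathlib

section
/- Every finite simple graph G admits an in-out-proper orientation D such that |d_D^±(v)| ≤ Δ(G) for every vertex v; i.e., the in-out-proper orientation number χ↔(G) is well-defined and satisfies χ↔(G) ≤ Δ(G). -/
/-- An orientation of a simple graph `G`: for each edge `{u,v}` exactly one of the
two directions is chosen. `dir u v = true` means the arc goes from `u` to `v`. -/
structure Orient {V : Type*} (G : SimpleGraph V) where
  dir : V → V → Bool
  consistent : ∀ u v, G.Adj u v → dir u v = !dir v u

variable {V : Type*}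

/-- In-degree of `v` in the orientation `D`. -/
def inDeg [Fintype V] (G : SimpleGraph V) [DecidableRel G.Adj] (D : Orient G) (v : V) : ℕ :=
  (Finset.univ.filter (fun u => G.Adj u v ∧ D.dir u v = true)).card

/-- Out-degree of `v` in the orientation `D`. -/
def outDeg [Fintype V] (G : SimpleGraph V) [DecidableRel G.Adj] (D : Orient G) (v : V) : ℕ :=
  (Finset.univ.filter (fun u => G.Adj u v ∧ D.dir v u = true)).card

/-- In-out-degree `d_D^±(v) = d_D^-(v) - d_D^+(v)`. -/
def ioDeg [Fintype V] (G : SimpleGraph V) [DecidableRel G.Adj] (D : Orient G) (v : V) : ℤ :=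
  (inDeg G D v : ℤ) - (outDeg G D v : ℤ)

/-- An orientation is in-out-proper if adjacent vertices have distinct in-out-degrees. -/
def IsIOProper [Fintype V] (G : SimpleGraph V) [DecidableRel G.Adj] (D : Orient G) : Prop :=
  ∀ u v, G.Adj u v → ioDeg G D u ≠ ioDeg G D v

open Finset

section Aux
variable [Fintype V] (G : SimpleGraph V) [DecidableRel G.Adj]

lemma ioDeg_eq_sum (D : Orient G) (v : V) :
    ioDeg G D v = ∑ a, (if G.Adj a v then (if D.dir a v then (1:ℤ) else -1) else 0) := by
  classical
  have h1 : inDeg G D v = ∑ a, (if G.Adj a v ∧ D.dir a v = true then (1:ℕ) else 0) := by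
    rw [inDeg, card_filter]
  have h2 : outDeg G D v = ∑ a, (if G.Adj a v ∧ D.dir a v = false then (1:ℕ) else 0) := by
    rw [outDeg, card_filter]
    apply Finset.sum_congr rfl
    intro a _
    by_cases ha : G.Adj a v
    · have := D.consistent v a ha.symm
      cases hb : D.dir a v <;> simp [ha, this, hb]
    · simp [ha]
  rw [ioDeg, h1, h2]
  push_cast
  rw [← Finset.sum_sub_distrib]
  apply Finset.sum_congr rfl
  intro a _
  by_cases ha : G.Adj a v
  · cases hb : D.dir a v <;> simp [ha, hb]
  · simp [ha]

/-- Flip the orientation of the edge `{u,v}`. -/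
noncomputable def flipO (D : Orient G) (u v : V) : Orient G where
  dir a b := by classical exact
    if (a = u ∧ b = v) ∨ (a = v ∧ b = u) then !D.dir a b else D.dir a b
  consistent a b hab := by
    classical
    by_cases h : (a = u ∧ b = v) ∨ (a = v ∧ b = u)
    · have h' : (b = u ∧ a = v) ∨ (b = v ∧ a = u) := by tauto
      simp [h, h', D.consistent a b hab]
    · have h' : ¬((b = u ∧ a = v) ∨ (b = v ∧ a = u)) := by
        rintro (⟨rfl, rfl⟩ | ⟨rfl, rfl⟩) <;> tauto
      simp [h, h', D.consistent a b hab]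

lemma flipO_dir (D : Orient G) (u v a b : V) [Decidable ((a = u ∧ b = v) ∨ (a = v ∧ b = u))] :
    (flipO G D u v).dir a b =
      if (a = u ∧ b = v) ∨ (a = v ∧ b = u) then !D.dir a b else D.dir a b := by
  simp only [flipO]
  congr

lemma ioDeg_flip_other (D : Orient G) {u v w : V} (hwu : w ≠ u) (hwv : w ≠ v) :
    ioDeg G (flipO G D u v) w = ioDeg G D w := by
  classical
  rw [ioDeg_eq_sum, ioDeg_eq_sum]
  apply Finset.sum_congr rfl
  intro a _
  rw [flipO_dir]
  have : ¬((a = u ∧ w = v) ∨ (a = v ∧ w = u)) := by tauto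
  simp [this]

lemma ioDeg_flip_right (D : Orient G) {u v : V} (huv : G.Adj u v) :
    ioDeg G (flipO G D u v) v = ioDeg G D v + (if D.dir u v then -2 else 2) := by
  classical
  have hne : u ≠ v := G.ne_of_adj huv
  rw [ioDeg_eq_sum, ioDeg_eq_sum]
  rw [← sub_eq_iff_eq_add', ← Finset.sum_sub_distrib]
  rw [Finset.sum_eq_single u]
  · rw [flipO_dir]
    have h1 : ((u = u ∧ v = v) ∨ (u = v ∧ v = u)) := by tauto
    cases hb : D.dir u v <;> simp [huv, h1, hb]
  · intro a _ hau
    rw [flipO_dir]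
    simp [hau, Ne.symm hne]
  · simp

lemma ioDeg_flip_left (D : Orient G) {u v : V} (huv : G.Adj u v) :
    ioDeg G (flipO G D u v) u = ioDeg G D u + (if D.dir v u then -2 else 2) := by
  classical
  have hne : u ≠ v := G.ne_of_adj huv
  rw [ioDeg_eq_sum, ioDeg_eq_sum]
  rw [← sub_eq_iff_eq_add', ← Finset.sum_sub_distrib]
  rw [Finset.sum_eq_single v]
  · rw [flipO_dir]
    have h1 : ((v = u ∧ u = v) ∨ (v = v ∧ u = u)) := by tauto
    cases hb : D.dir v u <;> simp [huv.symm, h1, hb]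
  · intro a _ hav
    rw [flipO_dir]
    simp [hav, hne]
  · simp

lemma abs_ioDeg_le (D : Orient G) (v : V) : |ioDeg G D v| ≤ (G.maxDegree : ℤ) := by
  classical
  have hdeg : inDeg G D v + outDeg G D v = G.degree v := by
    have h2 : outDeg G D v =
        (Finset.univ.filter (fun u => G.Adj u v ∧ ¬(D.dir u v = true))).card := by
      rw [outDeg]
      congr 1
      apply Finset.filter_congr
      intro a _
      by_cases ha : G.Adj a v
      · have := D.consistent v a ha.symm
        cases hb : D.dir a v <;> simp [ha, this, hb]
      · simp [ha]
    have key := Finset.card_filter_add_card_filter_not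
      (s := Finset.univ.filter (fun u => G.Adj u v)) (p := fun u => D.dir u v = true)
    rw [Finset.filter_filter, Finset.filter_filter] at key
    have hdegeq : (Finset.univ.filter (fun u => G.Adj u v)).card = G.degree v := by
      rw [SimpleGraph.degree, SimpleGraph.neighborFinset_eq_filter]
      congr 1
      apply Finset.filter_congr
      intro a _
      simp [SimpleGraph.adj_comm]
    rw [inDeg, h2]
    rw [← hdegeq, ← key]
  have hmax := G.degree_le_maxDegree v
  rw [ioDeg, abs_le]
  constructor <;> omega


/-- A base orientation always exists. -/
noncomputable def baseOrient : Orient G := by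
  classical
  exact
  { dir := fun a b => decide ((Fintype.equivFin V) a < (Fintype.equivFin V) b)
    consistent := by
      intro a b hab
      have hne : (Fintype.equivFin V) a ≠ (Fintype.equivFin V) b := by
        simp [G.ne_of_adj hab]
      rcases lt_or_gt_of_ne hne with h | h
      · simp [h, not_lt_of_gt h]
      · simp [h, not_lt_of_gt h] }

theorem stmt_6' : ∃ D : Orient G, IsIOProper G D ∧ ∀ v, |ioDeg G D v| ≤ (G.maxDegree : ℤ) := by
  classical
  haveI : Fintype (Orient G) :=
    Fintype.ofInjective (fun D : Orient G => D.dir)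
      (by rintro ⟨d1, h1⟩ ⟨d2, h2⟩ h; simpa using h)
  haveI : Nonempty (Orient G) := ⟨baseOrient G⟩
  obtain ⟨D, hD⟩ := Finite.exists_max (fun D : Orient G => ∑ w, (ioDeg G D w) ^ 2)
  refine ⟨D, ?_, fun v => abs_ioDeg_le G D v⟩
  intro u v huv heq
  have hne : u ≠ v := G.ne_of_adj huv
  set D' := flipO G D u v with hD'
  have key := hD D'
  have hu : ioDeg G D' u = ioDeg G D u + (if D.dir v u then -2 else 2) :=
    ioDeg_flip_left G D huv
  have hv : ioDeg G D' v = ioDeg G D v + (if D.dir u v then -2 else 2) :=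
    ioDeg_flip_right G D huv
  have hdir : D.dir v u = !D.dir u v := D.consistent v u huv.symm
  have hsum : ∑ w, (ioDeg G D' w) ^ 2 = (∑ w, (ioDeg G D w) ^ 2) + 8 := by
    have hdiff : ∀ w, w ≠ u → w ≠ v → (ioDeg G D' w) ^ 2 - (ioDeg G D w) ^ 2 = 0 := by
      intro w hwu hwv
      rw [ioDeg_flip_other G D hwu hwv]
      ring
    have h1 : ∑ w, ((ioDeg G D' w) ^ 2 - (ioDeg G D w) ^ 2)
        = ∑ w ∈ ({u, v} : Finset V), ((ioDeg G D' w) ^ 2 - (ioDeg G D w) ^ 2) := by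
      symm
      apply Finset.sum_subset (Finset.subset_univ _)
      intro x _ hx
      simp only [Finset.mem_insert, Finset.mem_singleton] at hx
      push_neg at hx
      exact hdiff x hx.1 hx.2
    rw [← sub_eq_iff_eq_add', ← Finset.sum_sub_distrib, h1,
      Finset.sum_pair hne, hu, hv, hdir]
    set c := ioDeg G D u with hc
    rw [← heq]
    cases hb : D.dir u v <;> simp <;> ring
  have : ∑ w, (ioDeg G D w) ^ 2 + 8 ≤ ∑ w, (ioDeg G D w) ^ 2 := by
    calc ∑ w, (ioDeg G D w) ^ 2 + 8 = ∑ w, (ioDeg G D' w) ^ 2 := hsum.symm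
      _ ≤ ∑ w, (ioDeg G D w) ^ 2 := key
  omega

end Aux

/-- Every finite simple graph has an in-out-proper orientation with all absolute
in-out-degrees at most `Δ(G)`; i.e. `χ↔(G) ≤ Δ(G)`. -/
theorem stmt_6 [Fintype V] (G : SimpleGraph V) [DecidableRel G.Adj] :
    ∃ D : Orient G, IsIOProper G D ∧ ∀ v, |ioDeg G D v| ≤ (G.maxDegree : ℤ) := stmt_6' G
end

section
/- For every cycle C_n with n ≥ 3, the in-out-proper orientation number equals 2: every in-out-proper orientation of C_n has some vertex with in-out-degree of absolute value 2, and there exists an in-out-proper orientation with all in-out-degrees in {-2, 0, 2}. -/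
variable {V : Type*}

namespace StmtAux
open SimpleGraph Finset
variable {m : ℕ}

lemma adjSub (v : Fin (m+3)) : (cycleGraph (m+3)).Adj (v - 1) v := by
  rw [cycleGraph_adj]; right; rw [sub_sub_cancel]

lemma adjAdd (v : Fin (m+3)) : (cycleGraph (m+3)).Adj (v + 1) v := by
  rw [cycleGraph_adj]; left; rw [add_sub_cancel_left]

lemma valAdd (w : Fin (m+3)) : ((w + 1 : Fin (m+3))).val = if w.val = m + 2 then 0 else w.val + 1 := by
  rw [Fin.val_add_one]; simp [Fin.ext_iff]

lemma valSub (w : Fin (m+3)) : ((w - 1 : Fin (m+3))).val = if w.val = 0 then m + 2 else w.val - 1 := by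
  have h := valAdd (w - 1)
  rw [sub_add_cancel] at h
  have h2 := (w - 1 : Fin (m+3)).isLt
  split_ifs at h ⊢ <;> omega

lemma subNeAdd (v : Fin (m+3)) : v - 1 ≠ v + 1 := by
  intro h
  have := congrArg Fin.val h
  rw [valSub, valAdd] at this
  have hv := v.isLt
  split_ifs at this <;> omega

lemma adjCases {u v : Fin (m+3)} (h : (cycleGraph (m+3)).Adj u v) :
    u.val = v.val + 1 ∨ v.val = u.val + 1 ∨ (u.val = m + 2 ∧ v.val = 0) ∨ (v.val = m + 2 ∧ u.val = 0) := by
  rw [cycleGraph_adj] at h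
  rcases h with h | h
  · have hu : u = v + 1 := by rw [← h]; exact (add_sub_cancel _ _).symm
    have := valAdd v
    rw [← hu] at this
    have hv := v.isLt
    split_ifs at this <;> omega
  · have hv' : v = u + 1 := by rw [← h]; exact (add_sub_cancel _ _).symm
    have := valAdd u
    rw [← hv'] at this
    have hu := u.isLt
    split_ifs at this <;> omega

lemma cardFilter [inst : DecidableRel (cycleGraph (m+3)).Adj]
    (P : Fin (m+3) → Prop) [DecidablePred P] (v : Fin (m+3)) :
    (Finset.univ.filter (fun u => (cycleGraph (m+3)).Adj u v ∧ P u)).card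
      = (if P (v-1) then 1 else 0) + (if P (v+1) then 1 else 0) := by
  have hN : ∀ u : Fin (m+3), (cycleGraph (m+3)).Adj u v ↔ (u = v - 1 ∨ u = v + 1) := by
    intro u
    rw [SimpleGraph.adj_comm, ← SimpleGraph.mem_neighborSet, cycleGraph_neighborSet]
    simp
  have he : Finset.univ.filter (fun u => (cycleGraph (m+3)).Adj u v ∧ P u)
      = ({v - 1, v + 1} : Finset (Fin (m+3))).filter P := by
    ext u
    simp [hN u, or_and_right]
  rw [he, Finset.card_filter, Finset.sum_pair (subNeAdd v)]

lemma ioDegEq [inst : DecidableRel (cycleGraph (m+3)).Adj]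
    (D : Orient (cycleGraph (m+3))) (v : Fin (m+3)) :
    ioDeg (cycleGraph (m+3)) D v
      = (if D.dir (v-1) v = true then (1:ℤ) else -1) + (if D.dir (v+1) v = true then (1:ℤ) else -1) := by
  have h1 : D.dir v (v-1) = !D.dir (v-1) v := by
    have := D.consistent (v-1) v (adjSub v)
    rw [this, Bool.not_not]
  have h2 : D.dir v (v+1) = !D.dir (v+1) v := by
    have := D.consistent (v+1) v (adjAdd v)
    rw [this, Bool.not_not]
  have hin : inDeg (cycleGraph (m+3)) D v
      = (if D.dir (v-1) v = true then 1 else 0) + (if D.dir (v+1) v = true then 1 else 0) :=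
    cardFilter (fun u => D.dir u v = true) v
  have hout : outDeg (cycleGraph (m+3)) D v
      = (if D.dir v (v-1) = true then 1 else 0) + (if D.dir v (v+1) = true then 1 else 0) :=
    cardFilter (fun u => D.dir v u = true) v
  rw [ioDeg, hin, hout, h1, h2]
  cases D.dir (v-1) v <;> cases D.dir (v+1) v <;> simp

/-- the explicit orientation -/
def myO : Orient (cycleGraph (m+3)) where
  dir u v := decide ((u.val % 2 = 1 ∧ v.val % 2 = 0) ∨ (u.val = m + 2 ∧ v.val = 0))
  consistent := by
    intro u v h
    have hc := adjCases h
    have hu := u.isLt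
    have hv := v.isLt
    rw [← decide_not, decide_eq_decide]
    omega

lemma myOFormula [inst : DecidableRel (cycleGraph (m+3)).Adj] (v : Fin (m+3)) :
    ioDeg (cycleGraph (m+3)) (myO (m := m)) v
      = if v.val = m + 2 ∧ m % 2 = 0 then 0 else if v.val % 2 = 0 then 2 else -2 := by
  rw [ioDegEq]
  have hd1 : (myO (m := m)).dir (v-1) v
      = decide ((((v:Fin (m+3)) - 1).val % 2 = 1 ∧ v.val % 2 = 0) ∨ (((v:Fin (m+3)) - 1).val = m + 2 ∧ v.val = 0)) := rfl
  have hd2 : (myO (m := m)).dir (v+1) v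
      = decide ((((v:Fin (m+3)) + 1).val % 2 = 1 ∧ v.val % 2 = 0) ∨ (((v:Fin (m+3)) + 1).val = m + 2 ∧ v.val = 0)) := rfl
  rw [hd1, hd2]
  simp only [decide_eq_true_eq]
  have hs := valSub v
  have ha := valAdd v
  have hv := v.isLt
  set a := ((v : Fin (m+3)) - 1).val
  set b := ((v : Fin (m+3)) + 1).val
  split_ifs at hs ha ⊢ <;> omega

end StmtAux

/-- For every cycle `C_n` (`n ≥ 3`), `χ↔(C_n) = 2`. -/
theorem stmt_7 (n : ℕ) (hn : 3 ≤ n) [DecidableRel (SimpleGraph.cycleGraph n).Adj] :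
    (∀ D : Orient (SimpleGraph.cycleGraph n), IsIOProper _ D →
      ∃ v, |ioDeg (SimpleGraph.cycleGraph n) D v| = 2) ∧
    (∃ D : Orient (SimpleGraph.cycleGraph n), IsIOProper _ D ∧
      ∀ v, ioDeg (SimpleGraph.cycleGraph n) D v ∈ ({-2, 0, 2} : Set ℤ)) := by
  obtain ⟨m, rfl⟩ : ∃ m, n = m + 3 := ⟨n - 3, by omega⟩
  have hadj01 : (SimpleGraph.cycleGraph (m+3)).Adj 0 1 := by
    rw [SimpleGraph.cycleGraph_adj]
    right
    rw [sub_zero]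
  constructor
  · intro D hD
    by_contra hcon
    push_neg at hcon
    have h0 : ∀ v, ioDeg (SimpleGraph.cycleGraph (m+3)) D v = 0 := by
      intro v
      have h := StmtAux.ioDegEq D v
      have h2 := hcon v
      have h3 : ioDeg (SimpleGraph.cycleGraph (m+3)) D v = 2 ∨
          ioDeg (SimpleGraph.cycleGraph (m+3)) D v = 0 ∨
          ioDeg (SimpleGraph.cycleGraph (m+3)) D v = -2 := by
        rw [h]; split_ifs <;> norm_num
      rcases h3 with h3 | h3 | h3
      · exfalso; apply h2; rw [h3]; norm_num
      · exact h3
      · exfalso; apply h2; rw [h3]; norm_num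
    exact hD 0 1 hadj01 (by rw [h0 0, h0 1])
  · refine ⟨StmtAux.myO, ?_, ?_⟩
    · intro u v h
      rw [StmtAux.myOFormula, StmtAux.myOFormula]
      have hc := StmtAux.adjCases h
      have hu := u.isLt
      have hv := v.isLt
      split_ifs <;> omega
    · intro v
      rw [StmtAux.myOFormula]
      split_ifs <;> simp
end

section
/- For the complete graph K_n, every in-out-proper orientation contains a vertex whose in-out-degree has absolute value n-1; hence the in-out-proper orientation number of K_n equals n-1. -/
variable {V : Type*}

lemma deg_sum (n : ℕ) (D : Orient (⊤ : SimpleGraph (Fin n))) (v : Fin n) :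
    inDeg ⊤ D v + outDeg ⊤ D v = n - 1 := by
  classical
  unfold inDeg outDeg
  have h1 : (Finset.univ.filter (fun u => (⊤ : SimpleGraph (Fin n)).Adj u v ∧ D.dir v u = true))
      = (Finset.univ.filter (fun u => (⊤ : SimpleGraph (Fin n)).Adj u v ∧ ¬ (D.dir u v = true))) := by
    ext u
    simp only [Finset.mem_filter, Finset.mem_univ, true_and, and_congr_right_iff]
    intro hadj
    have := D.consistent u v hadj
    cases hdvu : D.dir v u <;> simp [hdvu] at this ⊢ <;> simp [this]
  rw [h1, ← Finset.filter_filter, ← Finset.filter_filter,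
    Finset.card_filter_add_card_filter_not]
  have : (Finset.univ.filter (fun u => (⊤ : SimpleGraph (Fin n)).Adj u v)) = Finset.univ.erase v := by
    ext u; simp [SimpleGraph.top_adj, eq_comm]
  rw [this, Finset.card_erase_of_mem (Finset.mem_univ v)]
  simp

lemma ioDeg_eq (n : ℕ) (D : Orient (⊤ : SimpleGraph (Fin n))) (v : Fin n) :
    ioDeg ⊤ D v = 2 * (inDeg ⊤ D v : ℤ) - (n - 1 : ℕ) := by
  have := deg_sum n D v
  unfold ioDeg
  omega

lemma natAbs_le (n : ℕ) (D : Orient (⊤ : SimpleGraph (Fin n))) (v : Fin n) :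
    (ioDeg ⊤ D v).natAbs ≤ n - 1 := by
  have := deg_sum n D v
  unfold ioDeg
  omega

/-- For the complete graph `K_n`, every in-out-proper orientation has a vertex of
absolute in-out-degree `n-1`, and `χ↔(K_n) = n-1`. -/
theorem stmt_8 (n : ℕ) (hn : 1 ≤ n) :
    (∀ D : Orient (⊤ : SimpleGraph (Fin n)), IsIOProper ⊤ D →
      ∃ v, (ioDeg (⊤ : SimpleGraph (Fin n)) D v).natAbs = n - 1) ∧
    (∃ D : Orient (⊤ : SimpleGraph (Fin n)), IsIOProper ⊤ D ∧
      ∀ v, (ioDeg (⊤ : SimpleGraph (Fin n)) D v).natAbs ≤ n - 1) := by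
  classical
  constructor
  · intro D hD
    have hlt : ∀ v, inDeg ⊤ D v < n := fun v => by have := deg_sum n D v; omega
    set f : Fin n → Fin n := fun v => ⟨inDeg ⊤ D v, hlt v⟩ with hf
    have hinj : Function.Injective f := by
      intro u v huv
      by_contra hne
      have hadj : (⊤ : SimpleGraph (Fin n)).Adj u v := by simp [hne]
      apply hD u v hadj
      have : inDeg ⊤ D u = inDeg ⊤ D v := congrArg Fin.val huv
      rw [ioDeg_eq, ioDeg_eq, this]
    have hsurj := (Finite.injective_iff_surjective.mp hinj) ⟨n - 1, by omega⟩
    obtain ⟨v, hv⟩ := hsurj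
    refine ⟨v, ?_⟩
    have h1 : inDeg ⊤ D v = n - 1 := congrArg Fin.val hv
    rw [ioDeg_eq, h1]
    omega
  · refine ⟨⟨fun u v => decide (u < v), ?_⟩, ?_, ?_⟩
    · intro u v hadj
      have hne : u ≠ v := hadj.ne
      rcases lt_trichotomy u v with h | h | h
      · simp [h, not_lt.mpr h.le]
      · exact absurd h hne
      · simp [h, not_lt.mpr h.le]
    · have hin : ∀ v : Fin n, inDeg ⊤ ⟨fun u v => decide (u < v), by
        intro u v hadj
        rcases lt_trichotomy u v with h | h | h
        · simp [h, not_lt.mpr h.le]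
        · exact absurd h hadj.ne
        · simp [h, not_lt.mpr h.le]⟩ v = v := by
        intro v
        unfold inDeg
        rw [show (Finset.univ.filter (fun u => (⊤ : SimpleGraph (Fin n)).Adj u v ∧ decide (u < v) = true))
          = Finset.Iio v by ext u; simp [SimpleGraph.top_adj]; intro h; exact Fin.ne_of_lt h]
        exact Fin.card_Iio v
      intro u v hadj heq
      apply hadj.ne
      rw [ioDeg_eq, ioDeg_eq, hin, hin] at heq
      have : (u : ℤ) = v := by omega
      exact Fin.ext (by exact_mod_cast this)
    · intro v
      exact natAbs_le n _ v
end

section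
/- Let G be a finite simple graph in which every vertex has degree 1 or 3, and suppose G admits an in-out-proper orientation D with |d_D^±(v)| ≤ 2 for all v. Then every in-out-degree in D belongs to {-1, +1} and G is bipartite. -/
variable {V : Type*}

lemma inDeg_add_outDeg [Fintype V] (G : SimpleGraph V) [DecidableRel G.Adj] (D : Orient G)
    (v : V) : inDeg G D v + outDeg G D v = G.degree v := by
  classical
  rw [inDeg, outDeg, ← SimpleGraph.card_neighborFinset_eq_degree]
  rw [← Finset.card_union_of_disjoint]
  · congr 1
    ext u
    simp only [Finset.mem_union, Finset.mem_filter, Finset.mem_univ, true_and,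
      SimpleGraph.mem_neighborFinset]
    constructor
    · rintro (⟨h, _⟩ | ⟨h, _⟩) <;> exact h.symm
    · intro h
      have hc := D.consistent u v h.symm
      cases hdv : D.dir u v with
      | true => exact Or.inl ⟨h.symm, rfl⟩
      | false =>
        right
        refine ⟨h.symm, ?_⟩
        rw [hdv] at hc
        simpa using hc.symm
  · rw [Finset.disjoint_left]
    intro u hu hv
    simp only [Finset.mem_filter, Finset.mem_univ, true_and] at hu hv
    have hc := D.consistent u v hu.1
    rw [hu.2, hv.2] at hc
    simp at hc

/-- If every vertex of `G` has degree 1 or 3 and `G` has an in-out-proper orientation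
with all `|d^±| ≤ 2`, then all in-out-degrees are `±1` and `G` is bipartite. -/
theorem stmt_11 [Fintype V] (G : SimpleGraph V) [DecidableRel G.Adj]
    (hdeg : ∀ v, G.degree v = 1 ∨ G.degree v = 3)
    (D : Orient G) (hD : IsIOProper G D) (hb : ∀ v, |ioDeg G D v| ≤ 2) :
    (∀ v, ioDeg G D v = 1 ∨ ioDeg G D v = -1) ∧ G.Colorable 2 := by
  have key : ∀ v, ioDeg G D v = 1 ∨ ioDeg G D v = -1 := by
    intro v
    have h1 := inDeg_add_outDeg G D v
    have h2 := hdeg v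
    have h3 := hb v
    rw [abs_le] at h3
    unfold ioDeg at *
    omega
  refine ⟨key, ?_⟩
  refine ⟨fun v => if ioDeg G D v = 1 then 0 else 1, ?_⟩
  intro u v huv
  simp only [SimpleGraph.top_adj, ne_eq]
  have hne := hD u v huv
  rcases key u with hu | hu <;> rcases key v with hv | hv <;>
    simp [hu, hv] at hne ⊢
end

section
/- Let G be a connected finite simple graph in which every vertex has degree 1 or 3, with bipartition classes X and Y. If G admits an in-out-proper orientation with all in-out-degrees of absolute value at most 2, then G admits an orientation in which every vertex of X has in-out-degree 1 and every vertex of Y has in-out-degree -1 (or vice versa). -/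
variable {V : Type*}

/-- A connected bipartite graph with degrees in `{1,3}` that has an in-out-proper
orientation with `|d^±| ≤ 2` has an orientation in which one bipartition class gets
in-out-degree `1` and the other `-1` (or vice versa). -/
theorem stmt_12 [Fintype V] (G : SimpleGraph V) [DecidableRel G.Adj]
    (hconn : G.Connected)
    (hdeg : ∀ v, G.degree v = 1 ∨ G.degree v = 3)
    (X : Set V) (hX : ∀ u v, G.Adj u v → (u ∈ X ↔ v ∉ X))
    (hex : ∃ D : Orient G, IsIOProper G D ∧ ∀ v, |ioDeg G D v| ≤ 2) :
    ∃ D' : Orient G,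
      ((∀ v ∈ X, ioDeg G D' v = 1) ∧ (∀ v ∉ X, ioDeg G D' v = -1)) ∨
      ((∀ v ∈ X, ioDeg G D' v = -1) ∧ (∀ v ∉ X, ioDeg G D' v = 1)) := by
  classical
  obtain ⟨D, hproper, hbd⟩ := hex
  -- every ioDeg is 1 or -1
  have hval : ∀ v, ioDeg G D v = 1 ∨ ioDeg G D v = -1 := by
    intro v
    have hsum := inDeg_add_outDeg G D v
    have hio : ioDeg G D v = (G.degree v : ℤ) - 2 * (outDeg G D v : ℤ) := by
      unfold ioDeg
      have : (inDeg G D v : ℤ) = (G.degree v : ℤ) - (outDeg G D v : ℤ) := by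
        have := congrArg (fun n : ℕ => (n : ℤ)) hsum
        push_cast at this
        linarith
      rw [this]; ring
    have habs := hbd v
    rw [abs_le] at habs
    rcases hdeg v with h | h <;> rw [h] at hio <;> omega
  -- adjacent vertices have opposite values
  have hopp : ∀ u v, G.Adj u v → (ioDeg G D u = 1 ↔ ¬ ioDeg G D v = 1) := by
    intro u v h
    have hne := hproper u v h
    rcases hval u with hu | hu <;> rcases hval v with hv | hv <;>
      simp [hu, hv] at hne ⊢
  -- the predicate P is constant along edges
  set P : V → Prop := fun v => (ioDeg G D v = 1 ↔ v ∈ X) with hP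
  have hstep : ∀ u v, G.Adj u v → (P u ↔ P v) := by
    intro u v h
    have h1 := hopp u v h
    have h2 := hX u v h
    simp only [hP]
    tauto
  have hconst : ∀ {u v : V} (_ : G.Walk u v), (P u ↔ P v) := by
    intro u v w
    induction w with
    | nil => exact Iff.rfl
    | cons h _ ih => exact (hstep _ _ h).trans ih
  obtain ⟨v0⟩ := hconn.nonempty
  refine ⟨D, ?_⟩
  by_cases hP0 : P v0
  · left
    constructor
    · intro v hv
      obtain ⟨w⟩ := hconn.preconnected v0 v
      have hPv : P v := (hconst w).mp hP0
      exact hPv.mpr hv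
    · intro v hv
      obtain ⟨w⟩ := hconn.preconnected v0 v
      have hPv : P v := (hconst w).mp hP0
      rcases hval v with h | h
      · exact absurd (hPv.mp h) hv
      · exact h
  · right
    constructor
    · intro v hv
      obtain ⟨w⟩ := hconn.preconnected v0 v
      have hPv : ¬ P v := fun h => hP0 ((hconst w).mpr h)
      rcases hval v with h | h
      · exact absurd (⟨fun _ => hv, fun _ => h⟩ : P v) hPv
      · exact h
    · intro v hv
      obtain ⟨w⟩ := hconn.preconnected v0 v
      have hPv : ¬ P v := fun h => hP0 ((hconst w).mpr h)
      rcases hval v with h | h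
      · exact h
      · have hPv2 : P v := by
          simp only [hP]
          constructor
          · intro h1
            rw [h1] at h
            exact absurd h (by decide)
          · intro hx
            exact absurd hx hv
        exact absurd hPv2 hPv
end

section
/- Let G be a cubic (3-regular) finite simple graph and H its line graph (which is 4-regular). If G admits a proper edge coloring with 3 colors, then H admits an in-out-proper orientation in which every in-out-degree belongs to {-2, 0, 2}; in particular χ↔(H) ≤ 2. -/
variable {V : Type*}

namespace Stmt18Aux

open Function

variable {α : Type*}

theorem exists_flip (σ0 σ2 : α → α) (h0 : Involutive σ0) (h2 : Involutive σ2)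
    (hne0 : ∀ v, σ0 v ≠ v) (hne2 : ∀ v, σ2 v ≠ v) :
    ∃ s : α → Bool, (∀ v, s (σ0 v) = ! s v) ∧ (∀ v, s (σ2 v) = ! s v) := by
  classical
  set a : Equiv.Perm α := h0.toPerm σ0 with ha
  set b : Equiv.Perm α := h2.toPerm σ2 with hb
  set τ : Equiv.Perm α := b * a with hτ
  have ainv : a⁻¹ = a := by
    ext x; simp [ha, Equiv.Perm.inv_def, Involutive.toPerm]
  have hconj : ∀ k : ℤ, a * τ ^ k = τ ^ (-k) * a := by
    intro k
    have hbase : a * τ * a⁻¹ = τ⁻¹ := by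
      rw [ainv, hτ]
      ext x
      simp [ha, hb, Involutive.toPerm, Equiv.Perm.mul_apply, Equiv.Perm.inv_def, h0 _]
    have := map_zpow (MulAut.conj a) τ k
    simp only [MulAut.conj_apply] at this
    rw [hbase] at this
    calc a * τ ^ k = (a * τ ^ k * a⁻¹) * a := by group
    _ = τ ^ (-k) * a := by rw [this]; group
  have hconj' : ∀ (k : ℤ) (v : α), σ0 ((τ ^ k) v) = (τ ^ (-k)) (σ0 v) := by
    intro k v
    have := congrFun (congrArg (fun (e : Equiv.Perm α) => (e : α → α)) (hconj k)) v
    simpa [Equiv.Perm.mul_apply, ha, Involutive.toPerm] using this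
  have hτapp : ∀ x, τ x = σ2 (σ0 x) := by
    intro x; simp [hτ, ha, hb, Equiv.Perm.mul_apply, Involutive.toPerm]
  -- key: σ0 v is never in the τ-orbit of v
  have noFix : ∀ (v : α) (k : ℤ), σ0 v ≠ (τ ^ k) v := by
    intro v k h
    rcases Int.even_or_odd k with ⟨j, hj⟩ | ⟨j, hj⟩
    · apply hne0 ((τ ^ j) v)
      have e1 : -j + k = j := by omega
      rw [hconj' j v, h, ← Equiv.Perm.mul_apply, ← zpow_add, e1]
    · -- k = 2j+1
      have hw : σ0 ((τ ^ j) v) = (τ ^ (j + 1)) v := by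
        have e1 : -j + k = j + 1 := by omega
        rw [hconj' j v, h, ← Equiv.Perm.mul_apply, ← zpow_add, e1]
      have hstep : (τ ^ (j + 1)) v = τ ((τ ^ j) v) := by
        have e1 : (1 : ℤ) + j = j + 1 := by omega
        rw [← Equiv.Perm.mul_apply, ← zpow_one_add, e1]
      apply hne2 (σ0 ((τ ^ j) v))
      calc σ2 (σ0 ((τ ^ j) v)) = τ ((τ ^ j) v) := (hτapp _).symm
        _ = (τ ^ (j + 1)) v := hstep.symm
        _ = σ0 ((τ ^ j) v) := hw.symm
  -- quotient by τ-orbits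
  let sd1 : Setoid α := ⟨fun v w => ∃ k : ℤ, (τ ^ k) v = w, by
    constructor
    · intro v; exact ⟨0, by simp⟩
    · rintro v w ⟨k, rfl⟩
      exact ⟨-k, by rw [← Equiv.Perm.mul_apply, ← zpow_add]; simp⟩
    · rintro u v w ⟨k, rfl⟩ ⟨l, rfl⟩
      exact ⟨l + k, by rw [← Equiv.Perm.mul_apply, ← zpow_add]⟩⟩
  let q1 : α → Quotient sd1 := fun v => Quotient.mk sd1 v
  have hq1 : ∀ v w, q1 v = q1 w ↔ ∃ k : ℤ, (τ ^ k) v = w := by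
    intro v w
    constructor
    · intro h; exact Quotient.exact h
    · intro h; exact Quotient.sound h
  -- σ0 descends to the quotient
  let ι : Quotient sd1 → Quotient sd1 := Quotient.map' σ0 (by
    rintro v w ⟨k, rfl⟩
    exact ⟨-k, (hconj' k v).symm⟩)
  have hι : ∀ v, ι (q1 v) = q1 (σ0 v) := fun v => rfl
  have hιinv : ∀ x, ι (ι x) = x := by
    intro x
    induction x using Quotient.inductionOn' with
    | h v => show q1 (σ0 (σ0 v)) = q1 v; rw [h0 v]
  have hιne : ∀ x, ι x ≠ x := by
    intro x
    induction x using Quotient.inductionOn' with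
    | h v =>
      intro h
      have : q1 (σ0 v) = q1 v := h
      rcases (hq1 _ _).1 this with ⟨k, hk⟩
      have : σ0 (σ0 v) = (τ ^ k) (σ0 v) := by rw [hk, h0 v]
      exact noFix (σ0 v) k this
  -- quotient by the pairing ι
  let sd2 : Setoid (Quotient sd1) := ⟨fun x y => y = x ∨ y = ι x, by
    constructor
    · intro x; exact Or.inl rfl
    · rintro x y (rfl | rfl)
      · exact Or.inl rfl
      · exact Or.inr (hιinv x).symm
    · rintro x y z (rfl | rfl) (rfl | rfl) <;>
        simp [hιinv, Or.inl rfl, Or.inr rfl]⟩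
  let s : α → Bool := fun v => decide ((Quotient.mk sd2 (q1 v)).out = q1 v)
  have hout : ∀ v, (Quotient.mk sd2 (q1 v)).out = q1 v ∨
      (Quotient.mk sd2 (q1 v)).out = ι (q1 v) := by
    intro v
    rcases Quotient.exact (Quotient.out_eq (Quotient.mk sd2 (q1 v))) with h | h
    · exact Or.inl h.symm
    · exact Or.inr ((congrArg ι h).trans (hιinv _)).symm
  have hs0 : ∀ v, s (σ0 v) = ! s v := by
    intro v
    have hq : q1 (σ0 v) ≠ q1 v := by rw [← hι]; exact hιne (q1 v)
    have hmk : (Quotient.mk sd2 (q1 (σ0 v))) = Quotient.mk sd2 (q1 v) := by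
      apply Quotient.sound
      show q1 v = q1 (σ0 v) ∨ q1 v = ι (q1 (σ0 v))
      right
      rw [hι, h0 v]
    show decide ((Quotient.mk sd2 (q1 (σ0 v))).out = q1 (σ0 v)) = ! s v
    rw [hmk]
    rcases hout v with h | h
    · have hne : (Quotient.mk sd2 (q1 v)).out ≠ q1 (σ0 v) := by
        rw [h, ← hι]
        exact fun hh => hιne (q1 v) hh.symm
      simp [s, h, hne, hq, hq.symm]
    · have heq : (Quotient.mk sd2 (q1 v)).out = q1 (σ0 v) := by rw [h, hι]
      have hne : (Quotient.mk sd2 (q1 v)).out ≠ q1 v := by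
        rw [h]; exact hιne (q1 v)
      simp [s, heq, hne, hq, hq.symm]
  have hsτ : ∀ v, s (τ v) = s v := by
    intro v
    have : q1 (τ v) = q1 v := by
      apply Quotient.sound
      show ∃ k : ℤ, (τ ^ k) (τ v) = v
      exact ⟨-1, by simp⟩
    show decide ((Quotient.mk sd2 (q1 (τ v))).out = q1 (τ v)) = s v
    rw [this]
  refine ⟨s, hs0, fun v => ?_⟩
  have : σ2 v = τ (σ0 v) := by rw [hτapp, h0 v]
  rw [this, hsτ, hs0]


variable {W : Type*}

/-- The edge of `G` given by an adjacency proof. -/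
def mkE (G : SimpleGraph W) {u v : W} (h : G.Adj u v) : G.edgeSet := ⟨s(u, v), h⟩

lemma mkE_symm (G : SimpleGraph W) {u v : W} (h : G.Adj u v) :
    mkE G h.symm = mkE G h := Subtype.ext (Sym2.eq_swap)

theorem exists_unique_nbr [Fintype W] [DecidableEq W] (G : SimpleGraph W)
    [DecidableRel G.Adj] (hcubic : ∀ v, G.degree v = 3) (f : G.edgeSet → Fin 3)
    (hf : ∀ e e', G.lineGraph.Adj e e' → f e ≠ f e') (v : W) (c : Fin 3) :
    ∃! u : W, ∃ h : G.Adj v u, f (mkE G h) = c := by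
  classical
  set g : W → Fin 3 := fun u => if h : G.Adj v u then f (mkE G h) else 0 with hg
  have hginj : ∀ u ∈ G.neighborFinset v, ∀ w ∈ G.neighborFinset v, g u = g w → u = w := by
    intro u hu w hw hgw
    rw [SimpleGraph.mem_neighborFinset] at hu hw
    by_contra hne
    have hadj : G.lineGraph.Adj (mkE G hu) (mkE G hw) := by
      rw [SimpleGraph.lineGraph_adj_iff_exists]
      refine ⟨?_, v, ?_, ?_⟩
      · intro hEq
        apply hne
        have : s(v, u) = s(v, w) := congrArg Subtype.val hEq
        rcases Sym2.eq_iff.1 this with ⟨-, h2⟩ | ⟨h1, h2⟩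
        · exact h2
        · exact absurd h1 hw.ne
      · exact Sym2.mem_mk_left v u
      · exact Sym2.mem_mk_left v w
    apply hf _ _ hadj
    simpa [hg, hu, hw] using hgw
  have hcard : ((G.neighborFinset v).image g).card = 3 := by
    rw [Finset.card_image_of_injOn hginj]
    exact hcubic v
  have himg : (G.neighborFinset v).image g = Finset.univ := by
    apply Finset.eq_univ_of_card
    simp [hcard]
  have hc : c ∈ (G.neighborFinset v).image g := by rw [himg]; exact Finset.mem_univ c
  rcases Finset.mem_image.1 hc with ⟨u, hu, hgu⟩
  have huadj : G.Adj v u := (SimpleGraph.mem_neighborFinset _ _ _).1 hu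
  refine ⟨u, ⟨huadj, by simpa [hg, huadj] using hgu⟩, ?_⟩
  rintro y ⟨hy, hyc⟩
  apply hginj y (by rwa [SimpleGraph.mem_neighborFinset]) u hu
  rw [hgu]
  simp [hg, hy, hyc]

theorem keynum : ∀ (a b c : Fin 3) (su sv : Bool), a ≠ b → a ≠ c → b ≠ c →
    (c = 1 ∨ su = !sv) →
    ((if su then ((if a < c then (1 : ℕ) else 0) + (if b < c then 1 else 0))
      else ((if c = a + 1 then 1 else 0) + (if c = b + 1 then 1 else 0))) +
     (if sv then ((if a < c then 1 else 0) + (if b < c then 1 else 0))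
      else ((if c = a + 1 then 1 else 0) + (if c = b + 1 then 1 else 0)))) = (c : ℕ) + 1 := by
  intro a b c su sv h1 h2 h3 h4
  fin_cases a <;> fin_cases b <;> fin_cases c <;> cases su <;> cases sv <;> simp_all

end Stmt18Aux

open Stmt18Aux

/-- If a cubic graph `G` has a proper edge 3-coloring, then its line graph has an
in-out-proper orientation with all in-out-degrees in `{-2,0,2}`; so `χ↔(H) ≤ 2`. -/
theorem stmt_18 [Fintype V] [DecidableEq V] (G : SimpleGraph V) [DecidableRel G.Adj]
    (hcubic : ∀ v, G.degree v = 3)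
    [DecidableRel G.lineGraph.Adj]
    (f : G.edgeSet → Fin 3)
    (hf : ∀ e e', G.lineGraph.Adj e e' → f e ≠ f e') :
    ∃ D : Orient G.lineGraph, IsIOProper G.lineGraph D ∧
      ∀ e, ioDeg G.lineGraph D e ∈ ({-2, 0, 2} : Set ℤ) := by
  classical
  -- the color-`c` neighbor function σ
  have hEU := exists_unique_nbr G hcubic f hf
  have hEU' : ∀ (c : Fin 3) (v : V), ∃ u, (∃ h : G.Adj v u, f (mkE G h) = c) ∧
      ∀ y, (∃ h : G.Adj v y, f (mkE G h) = c) → y = u := fun c v => hEU v c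
  choose σ hσ1 hσ2 using hEU'
  have hadj : ∀ (c : Fin 3) (v : V), G.Adj v (σ c v) := fun c v => (hσ1 c v).choose
  have hcol : ∀ (c : Fin 3) (v : V), f (mkE G (hadj c v)) = c := fun c v =>
    (hσ1 c v).choose_spec
  have hcol' : ∀ (c : Fin 3) (v u : V) (h : G.Adj v u), u = σ c v → f (mkE G h) = c := by
    intro c v u h hu
    subst hu
    exact hcol c v
  have huniq : ∀ (c : Fin 3) {v u : V} (h : G.Adj v u), f (mkE G h) = c → u = σ c v :=
    fun c v u h hc => hσ2 c v u ⟨h, hc⟩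
  have hinvol : ∀ (c : Fin 3), Function.Involutive (σ c) := by
    intro c v
    refine (huniq c (hadj c v).symm ?_).symm
    rw [mkE_symm]
    exact hcol c v
  have hne : ∀ (c : Fin 3) (v : V), σ c v ≠ v := fun c v => (hadj c v).ne'
  -- the cut function s
  obtain ⟨s, hs0, hs2⟩ := exists_flip (σ 0) (σ 2) (hinvol 0) (hinvol 2) (hne 0) (hne 2)
  -- the orientation rule
  set R : V → G.edgeSet → G.edgeSet → Prop :=
    fun w e e' => if s w then f e < f e' else f e' = f e + 1 with hR
  set dirf : G.edgeSet → G.edgeSet → Bool :=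
    fun e e' => decide (∃ w, w ∈ (e : Sym2 V) ∧ w ∈ (e' : Sym2 V) ∧ R w e e') with hdirf
  -- the shared vertex of two adjacent edges is unique
  have shared_unique : ∀ (e e' : G.edgeSet), e ≠ e' → ∀ w1 w2, w1 ∈ (e : Sym2 V) →
      w1 ∈ (e' : Sym2 V) → w2 ∈ (e : Sym2 V) → w2 ∈ (e' : Sym2 V) → w1 = w2 := by
    intro e e' hne w1 w2 h1 h1' h2 h2'
    by_contra hw
    exact hne (Subtype.ext (Sym2.eq_of_ne_mem hw h1 h2 h1' h2'))
  have dir_eq : ∀ (e e' : G.edgeSet) (w : V), e ≠ e' → w ∈ (e : Sym2 V) → w ∈ (e' : Sym2 V) →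
      dirf e e' = decide (R w e e') := by
    intro e e' w hnee hw hw'
    rw [hdirf]
    simp only []
    rw [decide_eq_decide]
    constructor
    · rintro ⟨x, hx, hx', hxR⟩
      rwa [shared_unique e e' hnee x w hx hx' hw hw'] at hxR
    · intro h; exact ⟨w, hw, hw', h⟩
  have finlt : ∀ x y : Fin 3, x ≠ y → (decide (x < y) = !decide (y < x)) := by decide
  have finadd : ∀ x y : Fin 3, x ≠ y → (decide (y = x + 1) = !decide (x = y + 1)) := by decide
  have hcons : ∀ e e', G.lineGraph.Adj e e' → dirf e e' = !dirf e' e := by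
    intro e e' hadj'
    obtain ⟨hnee, w, hw, hw'⟩ := SimpleGraph.lineGraph_adj_iff_exists.1 hadj'
    rw [dir_eq e e' w hnee hw hw', dir_eq e' e w (Ne.symm hnee) hw' hw]
    have hfne : f e ≠ f e' := hf e e' hadj'
    by_cases hsw : s w
    · simp only [hR, hsw, if_true]
      exact finlt _ _ hfne
    · simp only [hR, hsw, if_false]
      exact finadd _ _ hfne
  set D : Orient G.lineGraph := ⟨dirf, hcons⟩ with hD
  have hrep : ∀ e : G.edgeSet, ∃ (x y : V) (h : G.Adj x y), e = mkE G h := by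
    rintro ⟨es, he⟩
    induction es using Sym2.ind with
    | _ x y => exact ⟨x, y, he, rfl⟩
  have hio : ∀ e : G.edgeSet, ioDeg G.lineGraph D e = 2 * ((f e : ℕ) : ℤ) - 2 := by
    intro e
    obtain ⟨u, v, huv, rfl⟩ := hrep e
    set c : Fin 3 := f (mkE G huv) with hc
    have hvu : v = σ c u := huniq c huv rfl
    obtain ⟨a, b, hab, hac, hbc⟩ := (by decide :
      ∀ c : Fin 3, ∃ a b : Fin 3, a ≠ b ∧ a ≠ c ∧ b ≠ c) c
    have hall : ∀ d : Fin 3, d ≠ c → d = a ∨ d = b := fun d hd =>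
      (by decide : ∀ a b c d : Fin 3, a ≠ b → a ≠ c → b ≠ c → d ≠ c → d = a ∨ d = b)
        a b c d hab hac hbc hd
    -- σ d w is not the other endpoint, for d ≠ c
    have hkey : ∀ (d : Fin 3), d ≠ c → ∀ w w' : V,
        (w = u ∧ w' = v) ∨ (w = v ∧ w' = u) → σ d w ≠ w' := by
      rintro d hdc w w' h hEq
      apply hdc
      rcases h with ⟨rfl, rfl⟩ | ⟨rfl, rfl⟩
      · have h1 : mkE G (hadj d w) = mkE G huv :=
          Subtype.ext (show s(w, σ d w) = s(w, w') from by rw [hEq])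
        exact ((hcol d w).symm.trans (congrArg f h1)).trans hc.symm
      · have h1 : mkE G (hadj d w) = mkE G huv :=
          Subtype.ext (show s(w, σ d w) = s(w', w) from by rw [hEq]; exact Sym2.eq_swap)
        exact ((hcol d w).symm.trans (congrArg f h1)).trans hc.symm
    -- adjacency of the four candidate neighbors
    have hadjn : ∀ (d : Fin 3) (w : V), d ≠ c → (w = u ∨ w = v) →
        G.lineGraph.Adj (mkE G (hadj d w)) (mkE G huv) := by
      intro d w hdc hw
      rw [SimpleGraph.lineGraph_adj_iff_exists]
      refine ⟨?_, w, ?_, ?_⟩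
      · intro hEq
        apply hdc
        rw [← hcol d w, hEq]
      · exact Sym2.mem_mk_left w _
      · rcases hw with rfl | rfl <;> simp [mkE]
    -- distinctness of the four neighbors
    have dcol : ∀ (d d' : Fin 3) (w w' : V), d ≠ d' → mkE G (hadj d w) ≠ mkE G (hadj d' w') := by
      intro d d' w w' hdd h
      exact hdd (by rw [← hcol d w, h, hcol d' w'])
    have dsame : ∀ (d : Fin 3), d ≠ c → mkE G (hadj d u) ≠ mkE G (hadj d v) := by
      intro d hdc h
      have hval : s(u, σ d u) = s(v, σ d v) := congrArg Subtype.val h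
      have : u ∈ s(v, σ d v) := hval ▸ Sym2.mem_mk_left u _
      rcases Sym2.mem_iff.1 this with h1 | h1
      · exact huv.ne h1
      · exact hkey d hdc v u (Or.inr ⟨rfl, rfl⟩) h1.symm
    have d1 := dcol a b u u hab
    have d2 := dsame a hac
    have d3 := dcol a b u v hab
    have d4 := dcol b a u v (Ne.symm hab)
    have d5 := dsame b hbc
    have d6 := dcol a b v v hab
    set N : Finset G.edgeSet := insert (mkE G (hadj a u)) (insert (mkE G (hadj b u))
      (insert (mkE G (hadj a v)) {mkE G (hadj b v)})) with hNdef
    have hN : Finset.univ.filter (fun e' => G.lineGraph.Adj e' (mkE G huv)) = N := by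
      ext e'
      simp only [Finset.mem_filter, Finset.mem_univ, true_and, hNdef, Finset.mem_insert,
        Finset.mem_singleton]
      constructor
      · intro hA
        obtain ⟨hnee, x, hxe', hxe⟩ := SimpleGraph.lineGraph_adj_iff_exists.1 hA
        have hx : x = u ∨ x = v := Sym2.mem_iff.1 hxe
        obtain ⟨p, q, hpq, rfl⟩ := hrep e'
        have hex : ∃ (y : V) (h : G.Adj x y), mkE G hpq = mkE G h := by
          rcases Sym2.mem_iff.1 hxe' with rfl | rfl
          · exact ⟨q, hpq, rfl⟩
          · exact ⟨p, hpq.symm, (mkE_symm G hpq).symm⟩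
        obtain ⟨y, hxy, hEq⟩ := hex
        rw [hEq] at hA ⊢
        have hdc : f (mkE G hxy) ≠ c := hf _ _ hA
        have hy : y = σ (f (mkE G hxy)) x := huniq _ hxy rfl
        have hrw : mkE G hxy = mkE G (hadj (f (mkE G hxy)) x) :=
          Subtype.ext (show s(x, y) = s(x, σ (f (mkE G hxy)) x) from by rw [← hy])
        rcases hall _ hdc with hd | hd <;> rcases hx with rfl | rfl
        · exact Or.inl (by rw [hrw, hd])
        · exact Or.inr (Or.inr (Or.inl (by rw [hrw, hd])))
        · exact Or.inr (Or.inl (by rw [hrw, hd]))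
        · exact Or.inr (Or.inr (Or.inr (by rw [hrw, hd])))
      · rintro (rfl | rfl | rfl | rfl)
        · exact hadjn a u hac (Or.inl rfl)
        · exact hadjn b u hbc (Or.inl rfl)
        · exact hadjn a v hac (Or.inr rfl)
        · exact hadjn b v hbc (Or.inr rfl)
    have hN4 : N.card = 4 := by
      rw [hNdef]
      rw [Finset.card_insert_of_notMem (by simp [d1, d2, d3]),
        Finset.card_insert_of_notMem (by simp [d4, d5]),
        Finset.card_insert_of_notMem (by simp [d6]), Finset.card_singleton]
    -- value of the orientation on each neighbor
    have hval : ∀ (d : Fin 3) (w : V), d ≠ c → (w = u ∨ w = v) →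
        (D.dir (mkE G (hadj d w)) (mkE G huv) = true ↔
          (if s w then d < c else c = d + 1)) := by
      intro d w hdc hw
      have hnee : mkE G (hadj d w) ≠ mkE G huv := by
        intro h
        apply hdc
        rw [← hcol d w, h]
      have hwmem : w ∈ (mkE G (hadj d w) : Sym2 V) := Sym2.mem_mk_left w _
      have hwmem' : w ∈ (mkE G huv : Sym2 V) := by
        rcases hw with rfl | rfl <;> simp [mkE]
      have hde := dir_eq (mkE G (hadj d w)) (mkE G huv) w hnee hwmem hwmem'
      show dirf _ _ = true ↔ _
      rw [hde, decide_eq_true_iff, hR]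
      simp only [hcol d w, ← hc]
    -- in- and out-degrees
    have hin : inDeg G.lineGraph D (mkE G huv) =
        (N.filter (fun e' => D.dir e' (mkE G huv) = true)).card := by
      rw [inDeg, ← hN, Finset.filter_filter]
    have hout : outDeg G.lineGraph D (mkE G huv) =
        (N.filter (fun e' => ¬ (D.dir e' (mkE G huv) = true))).card := by
      rw [outDeg, show (N.filter (fun e' => ¬ (D.dir e' (mkE G huv) = true))) =
        Finset.univ.filter (fun e' => G.lineGraph.Adj e' (mkE G huv) ∧
          ¬(D.dir e' (mkE G huv) = true)) from by rw [← hN, Finset.filter_filter]]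
      congr 1
      apply Finset.filter_congr
      intro e' _
      constructor
      · rintro ⟨h1, h2⟩
        refine ⟨h1, ?_⟩
        show ¬ (dirf e' (mkE G huv) = true)
        replace h2 : dirf (mkE G huv) e' = true := h2
        have h3 : dirf (mkE G huv) e' = !dirf e' (mkE G huv) := hcons _ _ h1.symm
        rw [h3] at h2
        simp only [Bool.not_eq_true'] at h2
        rw [h2]
        simp
      · rintro ⟨h1, h2⟩
        refine ⟨h1, ?_⟩
        replace h2 : ¬ (dirf e' (mkE G huv) = true) := h2
        have h4 : dirf e' (mkE G huv) = false := by
          cases hbb : dirf e' (mkE G huv)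
          · rfl
          · exact absurd hbb h2
        show dirf (mkE G huv) e' = true
        rw [hcons _ _ h1.symm, h4]
        rfl
    have hflip : c = 1 ∨ s u = ! s v := by
      rcases (by decide : ∀ x : Fin 3, x = 0 ∨ x = 1 ∨ x = 2) c with h0' | h1' | h2'
      · right
        have hv0 : v = σ 0 u := by rw [← h0']; exact hvu
        have hsv : s v = ! s u := by rw [hv0]; exact hs0 u
        rw [hsv, Bool.not_not]
      · left; exact h1'
      · right
        have hv2 : v = σ 2 u := by rw [← h2']; exact hvu
        have hsv : s v = ! s u := by rw [hv2]; exact hs2 u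
        rw [hsv, Bool.not_not]
    set A : ℕ :=
        ((if s u then ((if a < c then 1 else 0) + (if b < c then 1 else 0))
          else ((if c = a + 1 then 1 else 0) + (if c = b + 1 then 1 else 0))) +
         (if s v then ((if a < c then 1 else 0) + (if b < c then 1 else 0))
          else ((if c = a + 1 then 1 else 0) + (if c = b + 1 then 1 else 0)))) with hA
    have hinval : (N.filter (fun e' => D.dir e' (mkE G huv) = true)).card = A := by
      rw [Finset.card_filter, hNdef]
      rw [Finset.sum_insert (by simp [d1, d2, d3]),
        Finset.sum_insert (by simp [d4, d5]),
        Finset.sum_insert (by simp [d6]), Finset.sum_singleton]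
      rw [if_congr (hval a u hac (Or.inl rfl)) rfl rfl,
        if_congr (hval b u hbc (Or.inl rfl)) rfl rfl,
        if_congr (hval a v hac (Or.inr rfl)) rfl rfl,
        if_congr (hval b v hbc (Or.inr rfl)) rfl rfl]
      rw [hA]
      cases hsu : s u <;> cases hsv : s v <;> simp [hsu, hsv] <;> ring
    have hsplit : (N.filter (fun e' => D.dir e' (mkE G huv) = true)).card +
        (N.filter (fun e' => ¬ (D.dir e' (mkE G huv) = true))).card = 4 := by
      rw [Finset.card_filter_add_card_filter_not, hN4]
    have hnum := keynum a b c (s u) (s v) hab hac hbc hflip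
    rw [← hA] at hnum
    rw [ioDeg, hin, hout, hinval]
    rw [hinval] at hsplit
    omega
  refine ⟨D, ?_, ?_⟩
  · intro e e' hadj'
    rw [hio e, hio e']
    have hfne : f e ≠ f e' := hf e e' hadj'
    intro hEq
    apply hfne
    have : ((f e : ℕ) : ℤ) = ((f e' : ℕ) : ℤ) := by omega
    exact Fin.ext (by exact_mod_cast this)
  · intro e
    rw [hio e]
    have : f e = 0 ∨ f e = 1 ∨ f e = 2 :=
      (by decide : ∀ x : Fin 3, x = 0 ∨ x = 1 ∨ x = 2) (f e)
    rcases this with h | h | h <;> rw [h] <;> simp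
end
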